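/- Let F be a totally real number field of degree N with ring of integers 𝒪, let σ range over the N real embeddings F → ℝ, and write Nm = N_{F/ℚ}. Let m ∈ F be nonzero, let n be a positive rational number, and suppose y, y' ∈ m𝒪 are both nonzero, tr_{F/ℚ}(y y') = n, and σ(y)·σ(y') > 0 for every σ. Then |Nm(m)| ≤ |Nm(y)| ≤ (n/N)^N / |Nm(m)|, and likewise |Nm(m)| ≤ |Nm(y')| ≤ (n/N)^N / |Nm(m)|. -/

import Mathlib

open NumberField Finset

section aux
variable {F : Type*} [Field F] [NumberField F] {N : ℕ}
    (hdeg : Module.finrank ℚ F = N)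
    {σ : Fin N → (F →+* ℝ)} (hσ : Function.Bijective σ)

include hdeg hσ in
lemma aux_bij : Function.Bijective
    (fun j : Fin N => RingHom.equivRatAlgHom F ℂ ((algebraMap ℝ ℂ).comp (σ j))) := by
  rw [Fintype.bijective_iff_injective_and_card]
  refine ⟨fun i j h => hσ.injective ?_, by rw [AlgHom.card, hdeg, Fintype.card_fin]⟩
  have h2 := (RingHom.equivRatAlgHom F ℂ).injective h
  ext z
  have h3 : (algebraMap ℝ ℂ) (σ i z) = (algebraMap ℝ ℂ) (σ j z) :=
    congrArg (fun f => f z) h2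
  exact_mod_cast h3

include hdeg hσ in
lemma aux_norm_eq_prod (x : F) :
    ((Algebra.norm ℚ x : ℚ) : ℝ) = ∏ j, σ j x := by
  have h1 := Algebra.norm_eq_prod_embeddings ℚ ℂ x
  rw [← Fintype.prod_bijective _ (aux_bij hdeg hσ) _ _ (fun j => rfl)] at h1
  have h2 : ∀ j : Fin N,
      (RingHom.equivRatAlgHom F ℂ ((algebraMap ℝ ℂ).comp (σ j))) x = ((σ j x : ℝ) : ℂ) := fun j => rfl
  simp_rw [h2, eq_ratCast] at h1
  exact_mod_cast h1

include hdeg hσ in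
lemma aux_trace_eq_sum (x : F) :
    ((Algebra.trace ℚ F x : ℚ) : ℝ) = ∑ j, σ j x := by
  have h1 := trace_eq_sum_embeddings ℂ (K := ℚ) (L := F) (x := x)
  rw [← Fintype.sum_bijective _ (aux_bij hdeg hσ) _ _ (fun j => rfl)] at h1
  have h2 : ∀ j : Fin N,
      (RingHom.equivRatAlgHom F ℂ ((algebraMap ℝ ℂ).comp (σ j))) x = ((σ j x : ℝ) : ℂ) := fun j => rfl
  simp_rw [h2, eq_ratCast] at h1
  exact_mod_cast h1

end aux

/-- The norm bound from the proof of Proposition 4.11 (intersectionD). -/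
theorem norm_bounds_in_lattice
    (F : Type*) [Field F] [NumberField F] (N : ℕ)
    (hdeg : Module.finrank ℚ F = N)
    (σ : Fin N → (F →+* ℝ)) (hσ : Function.Bijective σ)
    (m : F) (hm : m ≠ 0) (n : ℚ) (hn : 0 < n)
    (y y' : F)
    (hy : ∃ a : 𝓞 F, y = m * (a : F)) (hy' : ∃ a : 𝓞 F, y' = m * (a : F))
    (hyne : y ≠ 0) (hy'ne : y' ≠ 0)
    (htr : Algebra.trace ℚ F (y * y') = n)
    (hpos : ∀ j, 0 < σ j y * σ j y') :
    (|Algebra.norm ℚ m| ≤ |Algebra.norm ℚ y| ∧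
      |Algebra.norm ℚ y| ≤ (n / N) ^ N / |Algebra.norm ℚ m|) ∧
    (|Algebra.norm ℚ m| ≤ |Algebra.norm ℚ y'| ∧
      |Algebra.norm ℚ y'| ≤ (n / N) ^ N / |Algebra.norm ℚ m|) := by
  have hN : 0 < N := hdeg ▸ Module.finrank_pos
  have hq0 : 0 < |Algebra.norm ℚ m| :=
    abs_pos.mpr ((Algebra.norm_ne_zero_iff).mpr hm)
  -- lower bounds
  have lower : ∀ w : F, (∃ a : 𝓞 F, w = m * (a : F)) → w ≠ 0 →
      |Algebra.norm ℚ m| ≤ |Algebra.norm ℚ w| := by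
    rintro w ⟨a, rfl⟩ hwne
    have haF : (a : F) ≠ 0 := fun h => hwne (by rw [h, mul_zero])
    have h1 : (1 : ℚ) ≤ |Algebra.norm ℚ (a : F)| := by
      have hz : Algebra.norm ℤ a ≠ 0 := by
        intro h
        have := Algebra.coe_norm_int (K := F) a
        rw [h] at this
        exact (Algebra.norm_ne_zero_iff.mpr haF) (by exact_mod_cast this.symm)
      have : (1 : ℤ) ≤ |Algebra.norm ℤ a| := Int.one_le_abs hz
      calc (1:ℚ) ≤ |((Algebra.norm ℤ a : ℤ) : ℚ)| := by exact_mod_cast this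
        _ = |Algebra.norm ℚ (a : F)| := by rw [Algebra.coe_norm_int]
    rw [map_mul, abs_mul]
    exact le_mul_of_one_le_right hq0.le h1
  have hlow := lower y hy hyne
  have hlow' := lower y' hy' hy'ne
  -- AM-GM product bound
  set P : ℝ := ∏ j, (σ j y * σ j y') with hP
  have hPpos : 0 < P := Finset.prod_pos fun j _ => hpos j
  have hsum : ∑ j, ((N : ℝ))⁻¹ * (σ j y * σ j y') = (n : ℝ) / N := by
    rw [← Finset.mul_sum]
    have h1 := aux_trace_eq_sum hdeg hσ (y * y')
    rw [htr] at h1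
    simp only [map_mul] at h1
    rw [← h1]; ring
  have hamgm : P ^ ((N : ℝ))⁻¹ ≤ (n : ℝ) / N := by
    have := Real.geom_mean_le_arith_mean_weighted Finset.univ
      (fun _ => ((N : ℝ))⁻¹) (fun j => σ j y * σ j y')
      (fun i _ => by positivity) (by
        simp [Finset.sum_const, Finset.card_univ]
        field_simp)
      (fun i _ => (hpos i).le)
    rw [Real.finset_prod_rpow _ _ (fun i _ => (hpos i).le)] at this
    exact this.trans_eq hsum
  have hPle : P ≤ ((n : ℝ) / N) ^ N := by
    have hid : (P ^ ((N : ℝ))⁻¹) ^ N = P := by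
      rw [← Real.rpow_natCast (P ^ _) N, ← Real.rpow_mul hPpos.le,
        inv_mul_cancel₀ (by exact_mod_cast hN.ne'), Real.rpow_one]
    calc P = (P ^ ((N : ℝ))⁻¹) ^ N := hid.symm
      _ ≤ ((n : ℝ) / N) ^ N := by
          exact pow_le_pow_left₀ (Real.rpow_nonneg hPpos.le _) hamgm N
  -- relate P to norms
  have hPnorm : P = ((|Algebra.norm ℚ y| * |Algebra.norm ℚ y'| : ℚ) : ℝ) := by
    have h1 : P = ((Algebra.norm ℚ y : ℚ) : ℝ) * ((Algebra.norm ℚ y' : ℚ) : ℝ) := by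
      rw [hP, Finset.prod_mul_distrib, ← aux_norm_eq_prod hdeg hσ y,
        ← aux_norm_eq_prod hdeg hσ y']
    have h3 : ((|Algebra.norm ℚ y| * |Algebra.norm ℚ y'| : ℚ) : ℝ)
        = |((Algebra.norm ℚ y : ℚ) : ℝ) * ((Algebra.norm ℚ y' : ℚ) : ℝ)| := by
      push_cast
      rw [abs_mul]
    rw [h3, ← h1, abs_of_pos hPpos]
  have hprod : |Algebra.norm ℚ y| * |Algebra.norm ℚ y'| ≤ (n / N) ^ N := by
    rw [← Rat.cast_le (K := ℝ), ← hPnorm]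
    calc P ≤ ((n : ℝ) / N) ^ N := hPle
      _ = (((n / N) ^ N : ℚ) : ℝ) := by push_cast; ring
  -- upper bounds
  have upper : |Algebra.norm ℚ y| ≤ (n / N) ^ N / |Algebra.norm ℚ m| := by
    rw [le_div_iff₀ hq0]
    calc |Algebra.norm ℚ y| * |Algebra.norm ℚ m|
        ≤ |Algebra.norm ℚ y| * |Algebra.norm ℚ y'| :=
          mul_le_mul_of_nonneg_left hlow' (abs_nonneg _)
      _ ≤ (n / N) ^ N := hprod
  have upper' : |Algebra.norm ℚ y'| ≤ (n / N) ^ N / |Algebra.norm ℚ m| := by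
    rw [le_div_iff₀ hq0]
    calc |Algebra.norm ℚ y'| * |Algebra.norm ℚ m|
        ≤ |Algebra.norm ℚ y'| * |Algebra.norm ℚ y| :=
          mul_le_mul_of_nonneg_left hlow (abs_nonneg _)
      _ = |Algebra.norm ℚ y| * |Algebra.norm ℚ y'| := mul_comm _ _
      _ ≤ (n / N) ^ N := hprod
  exact ⟨⟨hlow, upper⟩, ⟨hlow', upper'⟩⟩
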